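/- Fix integers N, m, s ≥ 1, real numbers Δt and ΔW¹,…,ΔW^m, and C² Hamiltonians H, h₁,…,h_m : ℝ^N × ℝ^N → ℝ. Let real coefficients a_{ij}, ā_{ij}, b_{ij}, b̄_{ij}, α_i, β_i (i,j = 1,…,s) satisfy: α_i ā_{ij} + α_j a_{ji} = α_i α_j, β_i b̄_{ij} + β_j b_{ji} = β_i β_j, β_i ā_{ij} + α_j b_{ji} = β_i α_j, and α_i b̄_{ij} + β_j a_{ji} = α_i β_j for all i,j. Let U ⊆ ℝ^N × ℝ^N be open and let Q_i, P_i : U → ℝ^N (i = 1,…,s) be differentiable maps satisfying, for every (q,p) ∈ U, the unforced stage equations Q_i = q + Δt Σ_j a_{ij} ∂H/∂p(Q_j,P_j) + Σ_r ΔW^r Σ_j b_{ij} ∂h_r/∂p(Q_j,P_j) and P_i = p − Δt Σ_j ā_{ij} ∂H/∂q(Q_j,P_j) − Σ_r ΔW^r Σ_j b̄_{ij} ∂h_r/∂q(Q_j,P_j). Define φ : U → ℝ^N × ℝ^N by φ(q,p) = (q₊, p₊) with q₊ = q + Δt Σ_i α_i ∂H/∂p(Q_i,P_i) + Σ_r ΔW^r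 Σ_i β_i ∂h_r/∂p(Q_i,P_i) and p₊ = p − Δt Σ_i α_i ∂H/∂q(Q_i,P_i) − Σ_r ΔW^r Σ_i β_i ∂h_r/∂q(Q_i,P_i). Then φ preserves the canonical symplectic form: Ω( Dφ(z)u, Dφ(z)v ) = Ω(u, v) for all z ∈ U and all u, v ∈ ℝ^N × ℝ^N. (The paper's claim that the Lagrange–d'Alembert partitioned Runge–Kutta methods degenerate to symplectic methods when the forcing terms vanish — condition (QS1) of quasi-symplecticity in Section 3.4.) -/

import Mathlib

/- STATEMENT 13: The Lagrange–d'Alembert partitioned Runge–Kutta methods degenerate to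
   symplectic methods when the forcing terms vanish
   (condition (QS1) of quasi-symplecticity, Section 3.4). -/

noncomputable section
open scoped BigOperators

abbrev E (N : ℕ) : Type := EuclideanSpace ℝ (Fin N)

/-- Gradient with respect to the first argument. -/
noncomputable def D1 {N : ℕ} (H : E N × E N → ℝ) (x y : E N) : E N :=
  gradient (fun x' => H (x', y)) x

/-- Gradient with respect to the second argument. -/
noncomputable def D2 {N : ℕ} (H : E N × E N → ℝ) (x y : E N) : E N :=
  gradient (fun y' => H (x, y')) y

/-- The canonical symplectic bilinear form on `ℝ^N × ℝ^N`. -/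
noncomputable def Omega {N : ℕ} (u v : E N × E N) : ℝ :=
  (inner ℝ u.1 v.2 : ℝ) - (inner ℝ u.2 v.1 : ℝ)


open scoped RealInnerProductSpace

section ALG
open scoped RealInnerProductSpace
open Finset
variable {F : Type*} [NormedAddCommGroup F] [InnerProductSpace ℝ F]

lemma PRK.one_side {τ σ : Type*} [Fintype τ] [Fintype σ] (st : τ → σ)
    (e : τ → ℝ) (Ac Abc : σ → τ → ℝ)
    (hcond : ∀ p t, e p * Abc (st p) t + e t * Ac (st t) p = e p * e t)
    (u1 v2 : F) (Ku Lv : τ → F) (dQu dPv : σ → F)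
    (hQu : ∀ i, dQu i = u1 + ∑ t, Ac i t • Ku t)
    (hPv : ∀ i, dPv i = v2 - ∑ t, Abc i t • Lv t) :
    ⟪u1 + ∑ t, e t • Ku t, v2 - ∑ t, e t • Lv t⟫
      = ⟪u1, v2⟫
        + ∑ t, e t * (⟪Ku t, dPv (st t)⟫ - ⟪dQu (st t), Lv t⟫) := by
  set M : τ → τ → ℝ := fun p t => ⟪Ku p, Lv t⟫ with hM
  have h1 : ∀ p, ⟪Ku p, v2⟫ = ⟪Ku p, dPv (st p)⟫ + ∑ t, Abc (st p) t * M p t := by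
    intro p
    have hv : v2 = dPv (st p) + ∑ t, Abc (st p) t • Lv t := by rw [hPv (st p)]; abel
    rw [hv]
    simp [inner_add_right, inner_sum, real_inner_smul_right, hM]
  have h2 : ∀ t, ⟪u1, Lv t⟫ = ⟪dQu (st t), Lv t⟫ - ∑ p, Ac (st t) p * M p t := by
    intro t
    have hu : u1 = dQu (st t) - ∑ p, Ac (st t) p • Ku p := by rw [hQu (st t)]; abel
    rw [hu]
    simp [inner_sub_left, sum_inner, real_inner_smul_left, hM]
  have key : (∑ p, ∑ t, e p * (Abc (st p) t * M p t)) + ∑ t, ∑ p, e t * (Ac (st t) p * M p t)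
      = ∑ p, ∑ t, e p * (e t * M p t) := by
    rw [Finset.sum_comm (s := univ) (t := univ) (f := fun t p => e t * (Ac (st t) p * M p t))]
    rw [← Finset.sum_add_distrib]
    refine Finset.sum_congr rfl fun p _ => ?_
    rw [← Finset.sum_add_distrib]
    refine Finset.sum_congr rfl fun t _ => ?_
    linear_combination M p t * hcond p t
  have hM' : ∀ p t, (inner ℝ (Ku p) (Lv t) : ℝ) = M p t := fun _ _ => rfl
  have hswap : (∑ x : τ, ∑ y : τ, e x * e y * M y x) = ∑ p, ∑ t, e p * (e t * M p t) := by
    rw [Finset.sum_comm]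
    exact Finset.sum_congr rfl fun p _ => Finset.sum_congr rfl fun t _ => by ring
  rw [inner_add_left, inner_sub_right, inner_sub_right]
  simp only [sum_inner, inner_sum, real_inner_smul_left, real_inner_smul_right]
  simp only [h1, h2, ← hM, mul_add, mul_sub, Finset.sum_add_distrib, Finset.sum_sub_distrib,
    Finset.mul_sum]
  simp only [hM']
  ring_nf
  ring_nf at hswap key
  linear_combination key - hswap

lemma PRK.omega_key {ι σ : Type*} [Fintype ι] [Fintype σ]
    (c : ι → ℝ) (w : ι → σ → ℝ) (A Ab : ι → σ → σ → ℝ)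
    (hcond : ∀ x y i j, w x i * Ab y i j + w y j * A x j i = w x i * w y j)
    (u1 u2 v1 v2 : F)
    (Ku Kv Lu Lv : ι → σ → F) (dQu dQv dPu dPv : σ → F)
    (hQu : ∀ i, dQu i = u1 + ∑ x, c x • ∑ j, A x i j • Ku x j)
    (hQv : ∀ i, dQv i = v1 + ∑ x, c x • ∑ j, A x i j • Kv x j)
    (hPu : ∀ i, dPu i = u2 - ∑ x, c x • ∑ j, Ab x i j • Lu x j)
    (hPv : ∀ i, dPv i = v2 - ∑ x, c x • ∑ j, Ab x i j • Lv x j)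
    (hsym : ∀ x i, ⟪Lu x i, dQv i⟫ + ⟪Ku x i, dPv i⟫ = ⟪dQu i, Lv x i⟫ + ⟪dPu i, Kv x i⟫) :
    ⟪u1 + ∑ x, c x • ∑ i, w x i • Ku x i, v2 - ∑ x, c x • ∑ i, w x i • Lv x i⟫
      - ⟪u2 - ∑ x, c x • ∑ i, w x i • Lu x i, v1 + ∑ x, c x • ∑ i, w x i • Kv x i⟫
      = ⟪u1, v2⟫ - ⟪u2, v1⟫ := by
  have conv : ∀ (d : ι → σ → ℝ) (V : ι → σ → F),
      (∑ x, c x • ∑ i, d x i • V x i) = ∑ t : ι × σ, (c t.1 * d t.1 t.2) • V t.1 t.2 := by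
    intro d V
    rw [← Finset.univ_product_univ, Finset.sum_product]
    exact Finset.sum_congr rfl fun x _ => by
      rw [Finset.smul_sum]
      exact Finset.sum_congr rfl fun i _ => (smul_smul _ _ _)
  have hcond' : ∀ p t : ι × σ,
      (c p.1 * w p.1 p.2) * (c t.1 * Ab t.1 p.2 t.2) + (c t.1 * w t.1 t.2) * (c p.1 * A p.1 t.2 p.2)
        = (c p.1 * w p.1 p.2) * (c t.1 * w t.1 t.2) := by
    intro p t
    linear_combination (c p.1 * c t.1) * hcond p.1 t.1 p.2 t.2
  have res1 : ⟪u1 + ∑ t : ι × σ, (c t.1 * w t.1 t.2) • Ku t.1 t.2,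
        v2 - ∑ t : ι × σ, (c t.1 * w t.1 t.2) • Lv t.1 t.2⟫
      = ⟪u1, v2⟫ + ∑ t : ι × σ, (c t.1 * w t.1 t.2)
          * (⟪Ku t.1 t.2, dPv t.2⟫ - ⟪dQu t.2, Lv t.1 t.2⟫) := by
    have := PRK.one_side (F := F) (Prod.snd) (fun t => c t.1 * w t.1 t.2)
      (fun i t => c t.1 * A t.1 i t.2) (fun i t => c t.1 * Ab t.1 i t.2) hcond' u1 v2
      (fun t => Ku t.1 t.2) (fun t => Lv t.1 t.2) dQu dPv
      (fun i => by rw [hQu i, conv]) (fun i => by rw [hPv i, conv])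
    simpa using this
  have res2 : ⟪v1 + ∑ t : ι × σ, (c t.1 * w t.1 t.2) • Kv t.1 t.2,
        u2 - ∑ t : ι × σ, (c t.1 * w t.1 t.2) • Lu t.1 t.2⟫
      = ⟪v1, u2⟫ + ∑ t : ι × σ, (c t.1 * w t.1 t.2)
          * (⟪Kv t.1 t.2, dPu t.2⟫ - ⟪dQv t.2, Lu t.1 t.2⟫) := by
    have := PRK.one_side (F := F) (Prod.snd) (fun t => c t.1 * w t.1 t.2)
      (fun i t => c t.1 * A t.1 i t.2) (fun i t => c t.1 * Ab t.1 i t.2) hcond' v1 u2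
      (fun t => Kv t.1 t.2) (fun t => Lu t.1 t.2) dQv dPu
      (fun i => by rw [hQv i, conv]) (fun i => by rw [hPu i, conv])
    simpa using this
  rw [conv w Ku, conv w Lv, conv w Lu, conv w Kv]
  have res2' := (real_inner_comm _ _).trans res2
  rw [res1, res2']
  have hS : (∑ t : ι × σ, (c t.1 * w t.1 t.2) * (⟪Ku t.1 t.2, dPv t.2⟫ - ⟪dQu t.2, Lv t.1 t.2⟫))
      = ∑ t : ι × σ, (c t.1 * w t.1 t.2) * (⟪Kv t.1 t.2, dPu t.2⟫ - ⟪dQv t.2, Lu t.1 t.2⟫) := by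
    refine Finset.sum_congr rfl fun t _ => ?_
    have h0 := hsym t.1 t.2
    have e1 := real_inner_comm (dPu t.2) (Kv t.1 t.2)
    have e2 := real_inner_comm (dQv t.2) (Lu t.1 t.2)
    have hb : ⟪Ku t.1 t.2, dPv t.2⟫ - ⟪dQu t.2, Lv t.1 t.2⟫
        = ⟪Kv t.1 t.2, dPu t.2⟫ - ⟪dQv t.2, Lu t.1 t.2⟫ := by linarith
    rw [hb]
  have e3 := real_inner_comm v1 u2
  linarith [hS]
end ALG

section Analytic
open scoped RealInnerProductSpace
variable {N : ℕ}

noncomputable def Gmap {N : ℕ} (f : E N × E N → ℝ) : E N × E N → E N × E N :=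
  fun w => (D1 f w.1 w.2, D2 f w.1 w.2)

noncomputable def toVec (N : ℕ) : (E N →L[ℝ] ℝ) →L[ℝ] E N :=
  ((InnerProductSpace.toDual ℝ (E N)).symm.toContinuousLinearEquiv :
    (StrongDual ℝ (E N)) ≃L[ℝ] E N).toContinuousLinearMap

lemma toVec_inner (φ : E N →L[ℝ] ℝ) (x : E N) : ⟪toVec N φ, x⟫ = φ x := by
  simp [toVec, InnerProductSpace.toDual_symm_apply]

noncomputable def ψ (N : ℕ) : ((E N × E N) →L[ℝ] ℝ) →L[ℝ] (E N × E N) :=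
  ((toVec N).comp ((ContinuousLinearMap.compL ℝ (E N) (E N × E N) ℝ).flip
      (ContinuousLinearMap.inl ℝ (E N) (E N)))).prod
  ((toVec N).comp ((ContinuousLinearMap.compL ℝ (E N) (E N × E N) ℝ).flip
      (ContinuousLinearMap.inr ℝ (E N) (E N))))

lemma ψ_fst (φ : (E N × E N) →L[ℝ] ℝ) (x : E N) :
    ⟪(ψ N φ).1, x⟫ = φ (x, 0) := by
  rw [show (ψ N φ).1 = toVec N (φ.comp (ContinuousLinearMap.inl ℝ (E N) (E N))) from rfl,
    toVec_inner]
  rfl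

lemma ψ_snd (φ : (E N × E N) →L[ℝ] ℝ) (x : E N) :
    ⟪(ψ N φ).2, x⟫ = φ (0, x) := by
  rw [show (ψ N φ).2 = toVec N (φ.comp (ContinuousLinearMap.inr ℝ (E N) (E N))) from rfl,
    toVec_inner]
  rfl

lemma gradient_inner' (g : E N → ℝ) (x u : E N) : ⟪gradient g x, u⟫ = fderiv ℝ g x u := by
  rw [gradient]
  exact InnerProductSpace.toDual_symm_apply

lemma D1_inner (f : E N × E N → ℝ) (w : E N × E N) (hf : DifferentiableAt ℝ f w) (u : E N) :
    ⟪D1 f w.1 w.2, u⟫ = fderiv ℝ f w (u, 0) := by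
  rw [D1, gradient_inner']
  have h1 : HasFDerivAt (fun x' : E N => f (x', w.2))
      ((fderiv ℝ f w).comp (ContinuousLinearMap.inl ℝ (E N) (E N))) w.1 := by
    have := (hf.hasFDerivAt : HasFDerivAt f (fderiv ℝ f w) (w.1, w.2)).comp w.1 (hasFDerivAt_prodMk_left (𝕜 := ℝ) w.1 w.2)
    exact this
  rw [h1.fderiv]
  simp

lemma D2_inner (f : E N × E N → ℝ) (w : E N × E N) (hf : DifferentiableAt ℝ f w) (u : E N) :
    ⟪D2 f w.1 w.2, u⟫ = fderiv ℝ f w (0, u) := by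
  rw [D2, gradient_inner']
  have h1 : HasFDerivAt (fun y' : E N => f (w.1, y'))
      ((fderiv ℝ f w).comp (ContinuousLinearMap.inr ℝ (E N) (E N))) w.2 := by
    have := (hf.hasFDerivAt : HasFDerivAt f (fderiv ℝ f w) (w.1, w.2)).comp w.2 (hasFDerivAt_prodMk_right (𝕜 := ℝ) w.1 w.2)
    exact this
  rw [h1.fderiv]
  simp

lemma Gmap_eq (f : E N × E N → ℝ) (hf : ContDiff ℝ 2 f) :
    Gmap f = fun w => ψ N (fderiv ℝ f w) := by
  funext w
  have hd : DifferentiableAt ℝ f w := (hf.differentiable (by norm_num)) w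
  refine Prod.ext ?_ ?_
  · refine ext_inner_right ℝ fun x => ?_
    rw [show (Gmap f w).1 = D1 f w.1 w.2 from rfl, D1_inner f w hd x, ψ_fst]
  · refine ext_inner_right ℝ fun x => ?_
    rw [show (Gmap f w).2 = D2 f w.1 w.2 from rfl, D2_inner f w hd x, ψ_snd]

lemma Gmap_hasFDerivAt (f : E N × E N → ℝ) (hf : ContDiff ℝ 2 f) (w : E N × E N) :
    HasFDerivAt (Gmap f) ((ψ N).comp (fderiv ℝ (fderiv ℝ f) w)) w := by
  have hfd : ContDiff ℝ 1 (fderiv ℝ f) := hf.fderiv_right (by norm_num)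
  have h1 : HasFDerivAt (fderiv ℝ f) (fderiv ℝ (fderiv ℝ f) w) w :=
    ((hfd.differentiable one_ne_zero) w).hasFDerivAt
  have h2 := ((ψ N).hasFDerivAt (x := fderiv ℝ f w)).comp w h1
  rw [Gmap_eq f hf]
  exact h2

lemma Gmap_pairing (f : E N × E N → ℝ) (hf : ContDiff ℝ 2 f) (w a b : E N × E N) :
    ⟪(fderiv ℝ (Gmap f) w a).1, b.1⟫ + ⟪(fderiv ℝ (Gmap f) w a).2, b.2⟫
      = fderiv ℝ (fderiv ℝ f) w a b := by
  rw [(Gmap_hasFDerivAt f hf w).fderiv]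
  simp only [ContinuousLinearMap.comp_apply]
  rw [ψ_fst, ψ_snd]
  rw [← map_add]
  norm_num

lemma Gmap_symm (f : E N × E N → ℝ) (hf : ContDiff ℝ 2 f) (w a b : E N × E N) :
    ⟪(fderiv ℝ (Gmap f) w a).1, b.1⟫ + ⟪(fderiv ℝ (Gmap f) w a).2, b.2⟫
      = ⟪(fderiv ℝ (Gmap f) w b).1, a.1⟫ + ⟪(fderiv ℝ (Gmap f) w b).2, a.2⟫ := by
  rw [Gmap_pairing f hf w a b, Gmap_pairing f hf w b a]
  exact (hf.contDiffAt.isSymmSndFDerivAt (by simp)) a b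

end Analytic

open scoped RealInnerProductSpace
set_option maxHeartbeats 2000000

theorem unforced_PRK_is_symplectic
    {N m s : ℕ} (hN : 1 ≤ N) (hm : 1 ≤ m) (hs : 1 ≤ s)
    (Δt : ℝ) (ΔW : Fin m → ℝ)
    (H : E N × E N → ℝ) (h : Fin m → E N × E N → ℝ)
    (hH : ContDiff ℝ 2 H) (hh : ∀ r, ContDiff ℝ 2 (h r))
    (a abar b bbar : Fin s → Fin s → ℝ) (α β : Fin s → ℝ)
    (hc1 : ∀ i j, α i * abar i j + α j * a j i = α i * α j)
    (hc2 : ∀ i j, β i * bbar i j + β j * b j i = β i * β j)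
    (hc3 : ∀ i j, β i * abar i j + α j * b j i = β i * α j)
    (hc4 : ∀ i j, α i * bbar i j + β j * a j i = α i * β j)
    (U : Set (E N × E N)) (hU : IsOpen U)
    (Q P : Fin s → E N × E N → E N)
    (hQdiff : ∀ i, ∀ z ∈ U, DifferentiableAt ℝ (Q i) z)
    (hPdiff : ∀ i, ∀ z ∈ U, DifferentiableAt ℝ (P i) z)
    -- the unforced stage equations, with (q, p) = z:
    (hQ : ∀ z ∈ U, ∀ i, Q i z = z.1
        + Δt • ∑ j, a i j • D2 H (Q j z) (P j z)
        + ∑ r, ΔW r • ∑ j, b i j • D2 (h r) (Q j z) (P j z))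
    (hP : ∀ z ∈ U, ∀ i, P i z = z.2
        - Δt • ∑ j, abar i j • D1 H (Q j z) (P j z)
        - ∑ r, ΔW r • ∑ j, bbar i j • D1 (h r) (Q j z) (P j z))
    -- the update map φ = (q₊, p₊):
    (qplus pplus : E N × E N → E N)
    (hqp : ∀ z ∈ U, qplus z = z.1
        + Δt • ∑ i, α i • D2 H (Q i z) (P i z)
        + ∑ r, ΔW r • ∑ i, β i • D2 (h r) (Q i z) (P i z))
    (hpp : ∀ z ∈ U, pplus z = z.2
        - Δt • ∑ i, α i • D1 H (Q i z) (P i z)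
        - ∑ r, ΔW r • ∑ i, β i • D1 (h r) (Q i z) (P i z)) :
    ∀ z ∈ U, ∀ u v : E N × E N,
      Omega (fderiv ℝ (fun z : E N × E N => (qplus z, pplus z)) z u)
            (fderiv ℝ (fun z : E N × E N => (qplus z, pplus z)) z v)
        = Omega u v := by
  intro z hz u v
  classical
  -- unified families over `Fin (m+1)`: index 0 is the deterministic part.
  set Hs : Fin (m+1) → (E N × E N → ℝ) := Fin.cases H h with hHs
  set cs : Fin (m+1) → ℝ := Fin.cases Δt ΔW with hcs
  set ws : Fin (m+1) → Fin s → ℝ := Fin.cases α (fun _ => β) with hws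
  set As : Fin (m+1) → Fin s → Fin s → ℝ := Fin.cases a (fun _ => b) with hAs
  set Abs : Fin (m+1) → Fin s → Fin s → ℝ := Fin.cases abar (fun _ => bbar) with hAbs
  have hHsC : ∀ x, ContDiff ℝ 2 (Hs x) := by
    intro x
    refine Fin.cases (motive := fun x => ContDiff ℝ 2 (Hs x)) ?_ ?_ x
    · simpa [hHs] using hH
    · intro r; simpa [hHs] using hh r
  have hcond : ∀ x y i j, ws x i * Abs y i j + ws y j * As x j i = ws x i * ws y j := by
    intro x y
    obtain rfl | ⟨x', rfl⟩ := Fin.eq_zero_or_eq_succ x <;>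
      obtain rfl | ⟨y', rfl⟩ := Fin.eq_zero_or_eq_succ y <;>
        intro i j <;> simp only [hws, hAs, hAbs, Fin.cases_zero, Fin.cases_succ]
    · exact hc1 i j
    · exact hc4 i j
    · exact hc3 i j
    · exact hc2 i j
  -- unified stage and update equations
  have hQ' : ∀ z' ∈ U, ∀ i, Q i z' = z'.1
      + ∑ x, cs x • ∑ j, As x i j • D2 (Hs x) (Q j z') (P j z') := by
    intro z' hz' i
    rw [Fin.sum_univ_succ]
    simp only [hcs, hAs, hHs, Fin.cases_zero, Fin.cases_succ]
    rw [hQ z' hz' i, add_assoc]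
  have hP' : ∀ z' ∈ U, ∀ i, P i z' = z'.2
      - ∑ x, cs x • ∑ j, Abs x i j • D1 (Hs x) (Q j z') (P j z') := by
    intro z' hz' i
    rw [Fin.sum_univ_succ]
    simp only [hcs, hAbs, hHs, Fin.cases_zero, Fin.cases_succ]
    rw [hP z' hz' i, sub_sub]
  have hqp' : ∀ z' ∈ U, qplus z' = z'.1
      + ∑ x, cs x • ∑ i, ws x i • D2 (Hs x) (Q i z') (P i z') := by
    intro z' hz'
    rw [Fin.sum_univ_succ]
    simp only [hcs, hws, hHs, Fin.cases_zero, Fin.cases_succ]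
    rw [hqp z' hz', add_assoc]
  have hpp' : ∀ z' ∈ U, pplus z' = z'.2
      - ∑ x, cs x • ∑ i, ws x i • D1 (Hs x) (Q i z') (P i z') := by
    intro z' hz'
    rw [Fin.sum_univ_succ]
    simp only [hcs, hws, hHs, Fin.cases_zero, Fin.cases_succ]
    rw [hpp z' hz', sub_sub]
  -- derivatives of stage values
  have hWd : ∀ i, HasFDerivAt (fun z' => (Q i z', P i z'))
      ((fderiv ℝ (Q i) z).prod (fderiv ℝ (P i) z)) z :=
    fun i => ((hQdiff i z hz).hasFDerivAt).prodMk ((hPdiff i z hz).hasFDerivAt)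
  set Dmap : Fin (m+1) → Fin s → (E N × E N) →L[ℝ] (E N × E N) := fun x i =>
    (fderiv ℝ (Gmap (Hs x)) (Q i z, P i z)).comp
      ((fderiv ℝ (Q i) z).prod (fderiv ℝ (P i) z)) with hDmap
  have hGcomp : ∀ x i, HasFDerivAt (fun z' => Gmap (Hs x) (Q i z', P i z')) (Dmap x i) z :=
    fun x i => by
      have := ((Gmap_hasFDerivAt (Hs x) (hHsC x) (Q i z, P i z)).differentiableAt.hasFDerivAt).comp
        z (hWd i)
      exact this
  have hKfd : ∀ x i, HasFDerivAt (fun z' => D2 (Hs x) (Q i z') (P i z'))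
      ((ContinuousLinearMap.snd ℝ (E N) (E N)).comp (Dmap x i)) z :=
    fun x i => (hGcomp x i).snd
  have hLfd : ∀ x i, HasFDerivAt (fun z' => D1 (Hs x) (Q i z') (P i z'))
      ((ContinuousLinearMap.fst ℝ (E N) (E N)).comp (Dmap x i)) z :=
    fun x i => (hGcomp x i).fst
  have hUev : ∀ᶠ z' in nhds z, z' ∈ U := hU.mem_nhds hz
  have hQfd : ∀ i, HasFDerivAt (Q i)
      ((ContinuousLinearMap.fst ℝ (E N) (E N)) + ∑ x, cs x • ∑ j, As x i j •
        ((ContinuousLinearMap.snd ℝ (E N) (E N)).comp (Dmap x j))) z := by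
    intro i
    have hform : HasFDerivAt
        (fun z' => z'.1 + ∑ x, cs x • ∑ j, As x i j • D2 (Hs x) (Q j z') (P j z'))
        ((ContinuousLinearMap.fst ℝ (E N) (E N)) + ∑ x, cs x • ∑ j, As x i j •
          ((ContinuousLinearMap.snd ℝ (E N) (E N)).comp (Dmap x j))) z :=
      (hasFDerivAt_fst.add (HasFDerivAt.fun_sum fun x _ =>
        ((HasFDerivAt.fun_sum fun j _ => (hKfd x j).const_smul (As x i j)).const_smul (cs x))))
    refine hform.congr_of_eventuallyEq ?_
    filter_upwards [hUev] with z' hz' using hQ' z' hz' i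
  have hPfd : ∀ i, HasFDerivAt (P i)
      ((ContinuousLinearMap.snd ℝ (E N) (E N)) - ∑ x, cs x • ∑ j, Abs x i j •
        ((ContinuousLinearMap.fst ℝ (E N) (E N)).comp (Dmap x j))) z := by
    intro i
    have hform : HasFDerivAt
        (fun z' => z'.2 - ∑ x, cs x • ∑ j, Abs x i j • D1 (Hs x) (Q j z') (P j z'))
        ((ContinuousLinearMap.snd ℝ (E N) (E N)) - ∑ x, cs x • ∑ j, Abs x i j •
          ((ContinuousLinearMap.fst ℝ (E N) (E N)).comp (Dmap x j))) z :=
      (hasFDerivAt_snd.sub (HasFDerivAt.fun_sum fun x _ =>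
        ((HasFDerivAt.fun_sum fun j _ => (hLfd x j).const_smul (Abs x i j)).const_smul (cs x))))
    refine hform.congr_of_eventuallyEq ?_
    filter_upwards [hUev] with z' hz' using hP' z' hz' i
  have hqfd : HasFDerivAt qplus
      ((ContinuousLinearMap.fst ℝ (E N) (E N)) + ∑ x, cs x • ∑ i, ws x i •
        ((ContinuousLinearMap.snd ℝ (E N) (E N)).comp (Dmap x i))) z := by
    have hform : HasFDerivAt
        (fun z' => z'.1 + ∑ x, cs x • ∑ i, ws x i • D2 (Hs x) (Q i z') (P i z'))
        ((ContinuousLinearMap.fst ℝ (E N) (E N)) + ∑ x, cs x • ∑ i, ws x i •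
          ((ContinuousLinearMap.snd ℝ (E N) (E N)).comp (Dmap x i))) z :=
      (hasFDerivAt_fst.add (HasFDerivAt.fun_sum fun x _ =>
        ((HasFDerivAt.fun_sum fun i _ => (hKfd x i).const_smul (ws x i)).const_smul (cs x))))
    refine hform.congr_of_eventuallyEq ?_
    filter_upwards [hUev] with z' hz' using hqp' z' hz'
  have hpfd : HasFDerivAt pplus
      ((ContinuousLinearMap.snd ℝ (E N) (E N)) - ∑ x, cs x • ∑ i, ws x i •
        ((ContinuousLinearMap.fst ℝ (E N) (E N)).comp (Dmap x i))) z := by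
    have hform : HasFDerivAt
        (fun z' => z'.2 - ∑ x, cs x • ∑ i, ws x i • D1 (Hs x) (Q i z') (P i z'))
        ((ContinuousLinearMap.snd ℝ (E N) (E N)) - ∑ x, cs x • ∑ i, ws x i •
          ((ContinuousLinearMap.fst ℝ (E N) (E N)).comp (Dmap x i))) z :=
      (hasFDerivAt_snd.sub (HasFDerivAt.fun_sum fun x _ =>
        ((HasFDerivAt.fun_sum fun i _ => (hLfd x i).const_smul (ws x i)).const_smul (cs x))))
    refine hform.congr_of_eventuallyEq ?_
    filter_upwards [hUev] with z' hz' using hpp' z' hz'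
  -- directional stage derivatives and Hessian vectors
  set dQu : Fin s → E N := fun i => fderiv ℝ (Q i) z u with hdQu
  set dQv : Fin s → E N := fun i => fderiv ℝ (Q i) z v with hdQv
  set dPu : Fin s → E N := fun i => fderiv ℝ (P i) z u with hdPu
  set dPv : Fin s → E N := fun i => fderiv ℝ (P i) z v with hdPv
  set Ku : Fin (m+1) → Fin s → E N := fun x i =>
    (fderiv ℝ (Gmap (Hs x)) (Q i z, P i z) (dQu i, dPu i)).2 with hKu
  set Kv : Fin (m+1) → Fin s → E N := fun x i =>
    (fderiv ℝ (Gmap (Hs x)) (Q i z, P i z) (dQv i, dPv i)).2 with hKv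
  set Lu : Fin (m+1) → Fin s → E N := fun x i =>
    (fderiv ℝ (Gmap (Hs x)) (Q i z, P i z) (dQu i, dPu i)).1 with hLu
  set Lv : Fin (m+1) → Fin s → E N := fun x i =>
    (fderiv ℝ (Gmap (Hs x)) (Q i z, P i z) (dQv i, dPv i)).1 with hLv
  have hdQu' : ∀ i, fderiv ℝ (Q i) z u = dQu i := fun _ => rfl
  have hdQv' : ∀ i, fderiv ℝ (Q i) z v = dQv i := fun _ => rfl
  have hdPu' : ∀ i, fderiv ℝ (P i) z u = dPu i := fun _ => rfl
  have hdPv' : ∀ i, fderiv ℝ (P i) z v = dPv i := fun _ => rfl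
  have hKu' : ∀ x i, (fderiv ℝ (Gmap (Hs x)) (Q i z, P i z) (dQu i, dPu i)).2 = Ku x i :=
    fun _ _ => rfl
  have hKv' : ∀ x i, (fderiv ℝ (Gmap (Hs x)) (Q i z, P i z) (dQv i, dPv i)).2 = Kv x i :=
    fun _ _ => rfl
  have hLu' : ∀ x i, (fderiv ℝ (Gmap (Hs x)) (Q i z, P i z) (dQu i, dPu i)).1 = Lu x i :=
    fun _ _ => rfl
  have hLv' : ∀ x i, (fderiv ℝ (Gmap (Hs x)) (Q i z, P i z) (dQv i, dPv i)).1 = Lv x i :=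
    fun _ _ => rfl
  have hDKu : ∀ x i (y : E N × E N),
      ((ContinuousLinearMap.snd ℝ (E N) (E N)).comp (Dmap x i)) y
        = (fderiv ℝ (Gmap (Hs x)) (Q i z, P i z) (fderiv ℝ (Q i) z y, fderiv ℝ (P i) z y)).2 := by
    intro x i y
    simp [hDmap]
  have hDLu : ∀ x i (y : E N × E N),
      ((ContinuousLinearMap.fst ℝ (E N) (E N)).comp (Dmap x i)) y
        = (fderiv ℝ (Gmap (Hs x)) (Q i z, P i z) (fderiv ℝ (Q i) z y, fderiv ℝ (P i) z y)).1 := by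
    intro x i y
    simp [hDmap]
  have hQu : ∀ i, dQu i = u.1 + ∑ x, cs x • ∑ j, As x i j • Ku x j := by
    intro i
    show fderiv ℝ (Q i) z u = _
    rw [(hQfd i).fderiv]
    simp only [ContinuousLinearMap.add_apply, ContinuousLinearMap.coe_fst',
      ContinuousLinearMap.sum_apply, ContinuousLinearMap.smul_apply, hDKu, hdQu', hdPu', hKu']
  have hQv : ∀ i, dQv i = v.1 + ∑ x, cs x • ∑ j, As x i j • Kv x j := by
    intro i
    show fderiv ℝ (Q i) z v = _
    rw [(hQfd i).fderiv]
    simp only [ContinuousLinearMap.add_apply, ContinuousLinearMap.coe_fst',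
      ContinuousLinearMap.sum_apply, ContinuousLinearMap.smul_apply, hDKu, hdQv', hdPv', hKv']
  have hPu : ∀ i, dPu i = u.2 - ∑ x, cs x • ∑ j, Abs x i j • Lu x j := by
    intro i
    show fderiv ℝ (P i) z u = _
    rw [(hPfd i).fderiv]
    simp only [ContinuousLinearMap.sub_apply, ContinuousLinearMap.coe_snd',
      ContinuousLinearMap.sum_apply, ContinuousLinearMap.smul_apply, hDLu, hdQu', hdPu', hLu']
  have hPv : ∀ i, dPv i = v.2 - ∑ x, cs x • ∑ j, Abs x i j • Lv x j := by
    intro i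
    show fderiv ℝ (P i) z v = _
    rw [(hPfd i).fderiv]
    simp only [ContinuousLinearMap.sub_apply, ContinuousLinearMap.coe_snd',
      ContinuousLinearMap.sum_apply, ContinuousLinearMap.smul_apply, hDLu, hdQv', hdPv', hLv']
  have hsym : ∀ x i, ⟪Lu x i, dQv i⟫ + ⟪Ku x i, dPv i⟫
      = ⟪dQu i, Lv x i⟫ + ⟪dPu i, Kv x i⟫ := by
    intro x i
    have h1 := Gmap_symm (Hs x) (hHsC x) (Q i z, P i z) (dQu i, dPu i) (dQv i, dPv i)
    dsimp only at h1
    simp only [hKu', hKv', hLu', hLv'] at h1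
    have e1 := real_inner_comm (dQu i) (Lv x i)
    have e2 := real_inner_comm (dPu i) (Kv x i)
    linarith [h1]
  -- assemble
  have hpair : fderiv ℝ (fun z' : E N × E N => (qplus z', pplus z')) z
      = (((ContinuousLinearMap.fst ℝ (E N) (E N)) + ∑ x, cs x • ∑ i, ws x i •
          ((ContinuousLinearMap.snd ℝ (E N) (E N)).comp (Dmap x i))).prod
        ((ContinuousLinearMap.snd ℝ (E N) (E N)) - ∑ x, cs x • ∑ i, ws x i •
          ((ContinuousLinearMap.fst ℝ (E N) (E N)).comp (Dmap x i)))) :=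
    (hqfd.prodMk hpfd).fderiv
  rw [hpair]
  have happly : ∀ y : E N × E N,
      ((((ContinuousLinearMap.fst ℝ (E N) (E N)) + ∑ x, cs x • ∑ i, ws x i •
          ((ContinuousLinearMap.snd ℝ (E N) (E N)).comp (Dmap x i))).prod
        ((ContinuousLinearMap.snd ℝ (E N) (E N)) - ∑ x, cs x • ∑ i, ws x i •
          ((ContinuousLinearMap.fst ℝ (E N) (E N)).comp (Dmap x i)))) y)
      = (y.1 + ∑ x, cs x • ∑ i, ws x i •
            (fderiv ℝ (Gmap (Hs x)) (Q i z, P i z) (fderiv ℝ (Q i) z y, fderiv ℝ (P i) z y)).2,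
         y.2 - ∑ x, cs x • ∑ i, ws x i •
            (fderiv ℝ (Gmap (Hs x)) (Q i z, P i z) (fderiv ℝ (Q i) z y, fderiv ℝ (P i) z y)).1) := by
    intro y
    refine Prod.ext ?_ ?_ <;>
      simp [ContinuousLinearMap.add_apply, ContinuousLinearMap.sub_apply,
        ContinuousLinearMap.sum_apply, ContinuousLinearMap.smul_apply, hDKu, hDLu]
  rw [Omega, Omega, happly u, happly v]
  simp only [hdQu', hdQv', hdPu', hdPv', hKu', hKv', hLu', hLv']
  exact PRK.omega_key cs ws As Abs hcond u.1 u.2 v.1 v.2 Ku Kv Lu Lv dQu dQv dPu dPv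
    hQu hQv hPu hPv hsym
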